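/- Every integer solution of the equation x⁴ + x²*y + y³ = 0 is either (0, 0) or of the form (x, y) = (-w - w³, -w²*(1 + w²)) for some integer w. Conversely, every pair of this form is a solution. -/

import Mathlib

theorem stmt_8 (x y : ℤ) :
    x ^ 4 + x ^ 2 * y + y ^ 3 = 0 ↔
      (x = 0 ∧ y = 0) ∨
      ∃ w : ℤ, x = -w - w ^ 3 ∧ y = -w ^ 2 * (1 + w ^ 2) := by
  constructor
  · intro h
    by_cases hx : x = 0
    · left
      subst hx
      refine ⟨rfl, ?_⟩
      have : y ^ 3 = 0 := by linarith [h]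
      exact pow_eq_zero_iff (by norm_num) |>.mp this
    · right
      have hgcd : 0 < Int.gcd x y := Int.gcd_pos_of_ne_zero_left y hx
      set d : ℤ := (Int.gcd x y : ℤ) with hdDef
      have hd : d ≠ 0 := by rw [hdDef]; exact_mod_cast hgcd.ne'
      set u : ℤ := x / d with hu
      set v : ℤ := y / d with hv
      have hx2 : x = u * d := (Int.ediv_mul_cancel (Int.gcd_dvd_left x y)).symm
      have hy2 : y = v * d := (Int.ediv_mul_cancel (Int.gcd_dvd_right x y)).symm
      have hcop : IsCoprime u v := by
        rw [Int.isCoprime_iff_gcd_eq_one]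
        exact Int.gcd_div_gcd_div_gcd hgcd
      have key : d * u ^ 4 + u ^ 2 * v + v ^ 3 = 0 := by
        have h3 : d ^ 3 * (d * u ^ 4 + u ^ 2 * v + v ^ 3) = 0 := by
          rw [hx2, hy2] at h
          linear_combination h
        rcases mul_eq_zero.mp h3 with h' | h'
        · exact absurd (pow_eq_zero_iff (by norm_num) |>.mp h') hd
        · exact h'
      have hdvd : u ^ 2 ∣ v ^ 3 := ⟨-(d * u ^ 2 + v), by linear_combination key⟩
      have hunit : IsUnit (u ^ 2) := (hcop.pow (m := 2) (n := 3)).isUnit_of_dvd hdvd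
      have hu2 : u ^ 2 = 1 := by
        rcases Int.isUnit_iff.mp hunit with h' | h'
        · exact h'
        · nlinarith [sq_nonneg u]
      have hdval : d = -v - v ^ 3 := by
        linear_combination key - (d * (u ^ 2 + 1) + v) * hu2
      refine ⟨u * v, ?_, ?_⟩
      · linear_combination hx2 + u * hdval + u * v ^ 3 * hu2
      · linear_combination hy2 + v * hdval + (v ^ 2 + v ^ 4 * (u ^ 2 + 1)) * hu2
  · rintro (⟨hx, hy⟩ | ⟨w, hx, hy⟩) <;> subst hx <;> subst hy <;> ring
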